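/- Let H be a finitely generated abelian group with basis {(eᵢ, nᵢ) : i ∈ I}, where I is a linearly ordered finite set. Then {(eᵢ∧eⱼ∧e_k, gcd(nᵢ, nⱼ, n_k)) : i < j < k in I} is a basis of Λ³H; that is, for all i < j < k the element eᵢ∧eⱼ∧e_k ∈ Λ³H has additive order gcd(nᵢ, nⱼ, n_k) (with gcd computed with the convention gcd involving 0 as usual, so that order 0 means infinite order), and Λ³H is the internal direct sum of the cyclic subgroups generated by the elements eᵢ∧eⱼ∧e_k for i < j < k. -/

import Mathlib

set_option linter.unusedSectionVars false
set_option maxHeartbeats 1000000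
set_option synthInstance.maxHeartbeats 400000

/-- A family `{(eᵢ, nᵢ)}` is a (cyclic) basis of the abelian group `A` if each `eᵢ` has
additive order `nᵢ` (`nᵢ = 0` meaning infinite order) and `A` is the internal direct sum of
the cyclic subgroups generated by the `eᵢ`. -/
def IsCyclicBasis {A : Type*} [AddCommGroup A] {I : Type*} [Fintype I] [DecidableEq I]
    (e : I → A) (n : I → ℕ) : Prop :=
  (∀ i, addOrderOf (e i) = n i) ∧
    DirectSum.IsInternal (fun i => AddSubgroup.zmultiples (e i))

/-- The decomposable element `x₁ ∧ x₂ ∧ x₃` of the third exterior power `Λ³M = ⋀[ℤ]^3 M`. -/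
noncomputable def wedge3 {M : Type*} [AddCommGroup M] (x₁ x₂ x₃ : M) : ⋀[ℤ]^3 M :=
  ⟨ExteriorAlgebra.ιMulti ℤ 3 ![x₁, x₂, x₃],
    ExteriorAlgebra.ιMulti_range ℤ 3 (Set.mem_range_self ![x₁, x₂, x₃])⟩

namespace Stmt4Aux

open DirectSum ExteriorAlgebra

variable {H : Type*} [AddCommGroup H]

/-! ### Coordinates in a cyclic subgroup -/

/-- Coordinate of an element of a cyclic subgroup, in `ZMod m`. -/
noncomputable def coordFunM (b : H) (m : ℕ) (y : AddSubgroup.zmultiples b) : ZMod m :=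
  ((AddSubgroup.mem_zmultiples_iff.mp y.2).choose : ZMod m)

lemma coordFunM_spec (b : H) (m : ℕ) (hm : addOrderOf b = m) (k : ℤ)
    (h : k • b ∈ AddSubgroup.zmultiples b) :
    coordFunM b m ⟨k • b, h⟩ = (k : ZMod m) := by
  set y : AddSubgroup.zmultiples b := ⟨k • b, h⟩
  have hc : (AddSubgroup.mem_zmultiples_iff.mp y.2).choose • b = k • b :=
    (AddSubgroup.mem_zmultiples_iff.mp y.2).choose_spec
  have h0 : ((AddSubgroup.mem_zmultiples_iff.mp y.2).choose - k) • b = 0 := by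
    rw [sub_smul, hc, sub_self]
  have hd : (m : ℤ) ∣ (AddSubgroup.mem_zmultiples_iff.mp y.2).choose - k := by
    rw [← hm]
    exact addOrderOf_dvd_iff_zsmul_eq_zero.mpr h0
  have := (ZMod.intCast_zmod_eq_zero_iff_dvd _ m).mpr hd
  rw [Int.cast_sub, sub_eq_zero] at this
  exact this

lemma coordFunM_add (b : H) (m : ℕ) (hm : addOrderOf b = m) (y z : AddSubgroup.zmultiples b) :
    coordFunM b m (y + z) = coordFunM b m y + coordFunM b m z := by
  obtain ⟨k, hk⟩ := AddSubgroup.mem_zmultiples_iff.mp y.2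
  obtain ⟨l, hl⟩ := AddSubgroup.mem_zmultiples_iff.mp z.2
  have hy : y = ⟨k • b, by rw [hk]; exact y.2⟩ := Subtype.ext hk.symm
  have hz : z = ⟨l • b, by rw [hl]; exact z.2⟩ := Subtype.ext hl.symm
  have hsum : (⟨k • b, by rw [hk]; exact y.2⟩ + ⟨l • b, by rw [hl]; exact z.2⟩ :
      AddSubgroup.zmultiples b) = ⟨(k + l) • b, by
        rw [add_smul, hk, hl]; exact (y + z).2⟩ := by
    apply Subtype.ext; simp [add_smul]
  rw [hy, hz, hsum, coordFunM_spec b m hm, coordFunM_spec b m hm, coordFunM_spec b m hm,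
    Int.cast_add]

/-! ### Projections from an internal direct sum decomposition -/

section proj

variable {I : Type*} [Fintype I] [DecidableEq I] {e : I → H}
variable (hint : Function.Bijective
  (DirectSum.coeAddMonoidHom (fun i => AddSubgroup.zmultiples (e i))))

noncomputable def E : (⨁ i, (AddSubgroup.zmultiples (e i))) ≃+ H :=
  AddEquiv.ofBijective _ hint

lemma E_apply (y : ⨁ i, (AddSubgroup.zmultiples (e i))) :
    E hint y = DirectSum.coeAddMonoidHom (fun i => AddSubgroup.zmultiples (e i)) y := rfl

lemma E_symm_e (j : I) : (E hint).symm (e j) =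
    DirectSum.of (fun i => AddSubgroup.zmultiples (e i)) j ⟨e j, AddSubgroup.mem_zmultiples _⟩ := by
  apply (E hint).injective
  rw [AddEquiv.apply_symm_apply, E_apply,
    DirectSum.coeAddMonoidHom_of (fun i => AddSubgroup.zmultiples (e i))]

noncomputable def proj (i : I) : H →+ AddSubgroup.zmultiples (e i) :=
  AddMonoidHom.mk' (fun x => (E hint).symm x i) (fun a b => by simp only [map_add]; rfl)

lemma proj_e_same (i : I) : proj hint i (e i) = ⟨e i, AddSubgroup.mem_zmultiples _⟩ := by
  show ((E hint).symm (e i)) i = _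
  rw [E_symm_e]
  exact DirectSum.of_eq_same _ _

lemma proj_e_ne {i j : I} (h : j ≠ i) : proj hint j (e i) = 0 := by
  show ((E hint).symm (e i)) j = _
  rw [E_symm_e]
  exact DirectSum.of_eq_of_ne _ _ _ (fun hh => h hh)

lemma sum_proj (x : H) : ∑ i, ((proj hint i x : H)) = x := by
  conv_rhs => rw [← (E hint).apply_symm_apply x]
  rw [← DirectSum.sum_univ_of (x := (E hint).symm x)]
  rw [map_sum]
  refine Finset.sum_congr rfl (fun i _ => ?_)
  rw [E_apply, DirectSum.coeAddMonoidHom_of (fun i => AddSubgroup.zmultiples (e i))]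
  rfl

include hint in
lemma exists_repr (x : H) : ∃ κ : I → ℤ, x = ∑ i, κ i • e i := by
  have h : ∀ i, ∃ k : ℤ, k • e i = ((proj hint i x : H)) := fun i =>
    AddSubgroup.mem_zmultiples_iff.mp (proj hint i x).2
  refine ⟨fun i => (h i).choose, ?_⟩
  calc x = ∑ i, ((proj hint i x : H)) := (sum_proj hint x).symm
    _ = ∑ i, (h i).choose • e i :=
      Finset.sum_congr rfl (fun i _ => ((h i).choose_spec).symm)

end proj

/-! ### The determinant alternating map over ℤ -/

noncomputable def detZ (g : ℕ) : (Fin 3 → ZMod g) [⋀^Fin 3]→ₗ[ℤ] ZMod g :=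
  { toMultilinearMap :=
      (Matrix.detRowAlternating (R := ZMod g) (n := Fin 3)).toMultilinearMap.restrictScalars ℤ
    map_eq_zero_of_eq' :=
      (Matrix.detRowAlternating (R := ZMod g) (n := Fin 3)).map_eq_zero_of_eq' }

lemma detZ_apply (g : ℕ) (v : Fin 3 → Fin 3 → ZMod g) : detZ g v = Matrix.det (Matrix.of v) := rfl

/-! ### Linear maps out of the third exterior power -/

noncomputable def fam {N : Type*} [AddCommGroup N] [Module ℤ N] (F : H [⋀^Fin 3]→ₗ[ℤ] N) :
    ∀ i : ℕ, H [⋀^Fin i]→ₗ[ℤ] N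
  | 3 => F
  | _ => 0

noncomputable def Phi {N : Type*} [AddCommGroup N] [Module ℤ N] (F : H [⋀^Fin 3]→ₗ[ℤ] N) :
    (⋀[ℤ]^3 H) →ₗ[ℤ] N :=
  (ExteriorAlgebra.liftAlternating (fam F)).comp (Submodule.subtype _)

lemma Phi_apply {N : Type*} [AddCommGroup N] [Module ℤ N] (F : H [⋀^Fin 3]→ₗ[ℤ] N)
    (v : Fin 3 → H) (hv : ExteriorAlgebra.ιMulti ℤ 3 v ∈ ⋀[ℤ]^3 H) :
    Phi F ⟨ExteriorAlgebra.ιMulti ℤ 3 v, hv⟩ = F v := by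
  show ExteriorAlgebra.liftAlternating (fam F) (ExteriorAlgebra.ιMulti ℤ 3 v) = F v
  rw [liftAlternating_apply_ιMulti]
  rfl

lemma Phi_wedge3 {N : Type*} [AddCommGroup N] [Module ℤ N] (F : H [⋀^Fin 3]→ₗ[ℤ] N)
    (x y z : H) : Phi F (wedge3 x y z) = F ![x, y, z] :=
  Phi_apply F ![x, y, z] _

/-! ### Multilinearity and swap lemmas for `ιMulti ℤ 3` -/

lemma expand {I : Type*} [Fintype I] [DecidableEq I] (e : I → H) (κ : Fin 3 → I → ℤ) :
    ExteriorAlgebra.ιMulti ℤ 3 (fun s => ∑ i, κ s i • e i) =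
    ∑ r : Fin 3 → I, (∏ s, κ s (r s)) • ExteriorAlgebra.ιMulti ℤ 3 (fun s => e (r s)) := by
  have h := (ExteriorAlgebra.ιMulti ℤ 3 (M := H)).toMultilinearMap.map_sum
    (g := fun s i => κ s i • e i)
  simp only [AlternatingMap.coe_multilinearMap] at h
  rw [h]
  refine Finset.sum_congr rfl (fun r _ => ?_)
  have h2 := (ExteriorAlgebra.ιMulti ℤ 3 (M := H)).toMultilinearMap.map_smul_univ
    (fun s => κ s (r s)) (fun s => e (r s))
  simp only [AlternatingMap.coe_multilinearMap] at h2
  exact h2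

lemma swap01 (x y z : H) :
    ExteriorAlgebra.ιMulti ℤ 3 ![y, x, z] = - ExteriorAlgebra.ιMulti ℤ 3 ![x, y, z] := by
  have h := (ExteriorAlgebra.ιMulti ℤ 3 (M := H)).map_swap ![x,y,z]
    (show (0 : Fin 3) ≠ 1 by decide)
  rw [show (![x,y,z] ∘ Equiv.swap (0:Fin 3) 1) = ![y,x,z] from by
    funext s; fin_cases s <;> simp [Equiv.swap_apply_def]] at h
  exact h

lemma swap12 (x y z : H) :
    ExteriorAlgebra.ιMulti ℤ 3 ![x, z, y] = - ExteriorAlgebra.ιMulti ℤ 3 ![x, y, z] := by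
  have h := (ExteriorAlgebra.ιMulti ℤ 3 (M := H)).map_swap ![x,y,z]
    (show (1 : Fin 3) ≠ 2 by decide)
  rw [show (![x,y,z] ∘ Equiv.swap (1:Fin 3) 2) = ![x,z,y] from by
    funext s; fin_cases s <;> simp [Equiv.swap_apply_def]] at h
  exact h

lemma smul_slot0 (k : ℤ) (x y z : H) :
    ExteriorAlgebra.ιMulti ℤ 3 ![k • x, y, z] = k • ExteriorAlgebra.ιMulti ℤ 3 ![x, y, z] := by
  have h := (ExteriorAlgebra.ιMulti ℤ 3 (M := H)).toMultilinearMap.map_smul_univ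
    ![k, 1, 1] ![x, y, z]
  simp only [AlternatingMap.coe_multilinearMap] at h
  rw [show (fun s => (![k, (1:ℤ), 1] s) • (![x,y,z] s)) = ![k • x, y, z] from by
    funext s; fin_cases s <;> simp] at h
  rw [h, Fin.prod_univ_three]
  simp

lemma wedge3_swap01 (x y z : H) : wedge3 x y z = - wedge3 y x z := by
  apply Subtype.ext
  show ExteriorAlgebra.ιMulti ℤ 3 ![x, y, z] =
    ((- wedge3 y x z : ⋀[ℤ]^3 H) : ExteriorAlgebra ℤ H)
  rw [show ((- wedge3 y x z : ⋀[ℤ]^3 H) : ExteriorAlgebra ℤ H) =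
    -((wedge3 y x z : ⋀[ℤ]^3 H) : ExteriorAlgebra ℤ H) from rfl]
  exact swap01 y x z

lemma wedge3_swap12 (x y z : H) : wedge3 x y z = - wedge3 x z y := by
  apply Subtype.ext
  show ExteriorAlgebra.ιMulti ℤ 3 ![x, y, z] =
    ((- wedge3 x z y : ⋀[ℤ]^3 H) : ExteriorAlgebra ℤ H)
  rw [show ((- wedge3 x z y : ⋀[ℤ]^3 H) : ExteriorAlgebra ℤ H) =
    -((wedge3 x z y : ⋀[ℤ]^3 H) : ExteriorAlgebra ℤ H) from rfl]
  exact swap12 x z y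

lemma zsmul_wedge3_slot0 (k : ℤ) (x y z : H) :
    k • wedge3 x y z = wedge3 (k • x) y z := by
  apply Subtype.ext
  rw [wedge3, wedge3]
  rw [Submodule.coe_smul]
  exact (smul_slot0 k x y z).symm

lemma kill_slot0 (m : ℕ) (x y z : H) (hm : m • x = 0) : m • wedge3 x y z = 0 := by
  rw [← natCast_zsmul, zsmul_wedge3_slot0, natCast_zsmul, hm]
  apply Subtype.ext
  rw [wedge3]
  exact (ExteriorAlgebra.ιMulti ℤ 3 (M := H)).map_coord_zero (i := 0) rfl

lemma kill_slot1 (m : ℕ) (x y z : H) (hm : m • y = 0) : m • wedge3 x y z = 0 := by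
  rw [wedge3_swap01 x y z, smul_neg, kill_slot0 m y x z hm, neg_zero]

lemma kill_slot2 (m : ℕ) (x y z : H) (hm : m • z = 0) : m • wedge3 x y z = 0 := by
  rw [wedge3_swap12 x y z, smul_neg, kill_slot1 m x z y hm, neg_zero]

/-! ### Main construction -/

section Main

variable {I : Type*} [Fintype I] [LinearOrder I] (e : I → H) (n : I → ℕ)

lemma sorted_mem_eq {a b c i j k : I} (hab : a < b) (hbc : b < c) (hij : i < j) (hjk : j < k)
    (ha : a = i ∨ a = j ∨ a = k) (hb : b = i ∨ b = j ∨ b = k) (hc : c = i ∨ c = j ∨ c = k) :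
    a = i ∧ b = j ∧ c = k := by
  rcases ha with rfl | rfl | rfl <;> rcases hb with rfl | rfl | rfl <;>
    rcases hc with rfl | rfl | rfl <;>
    first
      | exact ⟨rfl, rfl, rfl⟩
      | exact absurd hab (lt_irrefl _)
      | exact absurd hbc (lt_irrefl _)
      | exact absurd hij (lt_irrefl _)
      | exact absurd hjk (lt_irrefl _)
      | exact absurd (hab.trans hbc) (lt_irrefl _)
      | exact absurd (hab.trans hij) (lt_irrefl _)
      | exact absurd (hab.trans hjk) (lt_irrefl _)
      | exact absurd (hbc.trans hab) (lt_irrefl _)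
      | exact absurd (hbc.trans hij) (lt_irrefl _)
      | exact absurd (hbc.trans hjk) (lt_irrefl _)
      | exact absurd (hij.trans hab) (lt_irrefl _)
      | exact absurd (hij.trans hbc) (lt_irrefl _)
      | exact absurd (hij.trans hjk) (lt_irrefl _)
      | exact absurd (hjk.trans hab) (lt_irrefl _)
      | exact absurd (hjk.trans hbc) (lt_irrefl _)
      | exact absurd (hjk.trans hij) (lt_irrefl _)
      | exact absurd ((hab.trans hbc).trans hij) (lt_irrefl _)
      | exact absurd ((hab.trans hbc).trans hjk) (lt_irrefl _)
      | exact absurd ((hab.trans hij).trans hbc) (lt_irrefl _)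
      | exact absurd ((hab.trans hij).trans hjk) (lt_irrefl _)
      | exact absurd ((hab.trans hjk).trans hbc) (lt_irrefl _)
      | exact absurd ((hab.trans hjk).trans hij) (lt_irrefl _)
      | exact absurd ((hbc.trans hab).trans hij) (lt_irrefl _)
      | exact absurd ((hbc.trans hab).trans hjk) (lt_irrefl _)
      | exact absurd ((hbc.trans hij).trans hab) (lt_irrefl _)
      | exact absurd ((hbc.trans hij).trans hjk) (lt_irrefl _)
      | exact absurd ((hbc.trans hjk).trans hab) (lt_irrefl _)
      | exact absurd ((hbc.trans hjk).trans hij) (lt_irrefl _)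
      | exact absurd ((hij.trans hab).trans hbc) (lt_irrefl _)
      | exact absurd ((hij.trans hab).trans hjk) (lt_irrefl _)
      | exact absurd ((hij.trans hbc).trans hab) (lt_irrefl _)
      | exact absurd ((hij.trans hbc).trans hjk) (lt_irrefl _)
      | exact absurd ((hij.trans hjk).trans hab) (lt_irrefl _)
      | exact absurd ((hij.trans hjk).trans hbc) (lt_irrefl _)
      | exact absurd ((hjk.trans hab).trans hbc) (lt_irrefl _)
      | exact absurd ((hjk.trans hab).trans hij) (lt_irrefl _)
      | exact absurd ((hjk.trans hbc).trans hab) (lt_irrefl _)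
      | exact absurd ((hjk.trans hbc).trans hij) (lt_irrefl _)
      | exact absurd ((hjk.trans hij).trans hab) (lt_irrefl _)
      | exact absurd ((hjk.trans hij).trans hbc) (lt_irrefl _)
      | exact absurd (((hab.trans hbc).trans hij).trans hjk) (lt_irrefl _)
      | exact absurd (((hab.trans hbc).trans hjk).trans hij) (lt_irrefl _)
      | exact absurd (((hab.trans hij).trans hbc).trans hjk) (lt_irrefl _)
      | exact absurd (((hab.trans hij).trans hjk).trans hbc) (lt_irrefl _)
      | exact absurd (((hab.trans hjk).trans hbc).trans hij) (lt_irrefl _)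
      | exact absurd (((hab.trans hjk).trans hij).trans hbc) (lt_irrefl _)
      | exact absurd (((hbc.trans hab).trans hij).trans hjk) (lt_irrefl _)
      | exact absurd (((hbc.trans hab).trans hjk).trans hij) (lt_irrefl _)
      | exact absurd (((hbc.trans hij).trans hab).trans hjk) (lt_irrefl _)
      | exact absurd (((hbc.trans hij).trans hjk).trans hab) (lt_irrefl _)
      | exact absurd (((hbc.trans hjk).trans hab).trans hij) (lt_irrefl _)
      | exact absurd (((hbc.trans hjk).trans hij).trans hab) (lt_irrefl _)
      | exact absurd (((hij.trans hab).trans hbc).trans hjk) (lt_irrefl _)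
      | exact absurd (((hij.trans hab).trans hjk).trans hbc) (lt_irrefl _)
      | exact absurd (((hij.trans hbc).trans hab).trans hjk) (lt_irrefl _)
      | exact absurd (((hij.trans hbc).trans hjk).trans hab) (lt_irrefl _)
      | exact absurd (((hij.trans hjk).trans hab).trans hbc) (lt_irrefl _)
      | exact absurd (((hij.trans hjk).trans hbc).trans hab) (lt_irrefl _)
      | exact absurd (((hjk.trans hab).trans hbc).trans hij) (lt_irrefl _)
      | exact absurd (((hjk.trans hab).trans hij).trans hbc) (lt_irrefl _)
      | exact absurd (((hjk.trans hbc).trans hab).trans hij) (lt_irrefl _)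
      | exact absurd (((hjk.trans hbc).trans hij).trans hab) (lt_irrefl _)
      | exact absurd (((hjk.trans hij).trans hab).trans hbc) (lt_irrefl _)
      | exact absurd (((hjk.trans hij).trans hbc).trans hab) (lt_irrefl _)

variable (hord : ∀ i, addOrderOf (e i) = n i)
variable (hint : Function.Bijective
  (DirectSum.coeAddMonoidHom (fun i => AddSubgroup.zmultiples (e i))))

/-- The coordinate map `H →+ ZMod (n i)`. -/
noncomputable def coordZ (i : I) : H →+ ZMod (n i) :=
  AddMonoidHom.mk' (fun x => coordFunM (e i) (n i) (proj hint i x))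
    (fun a b => by
      show coordFunM (e i) (n i) (proj hint i (a + b)) = _
      rw [map_add]
      exact coordFunM_add _ _ (hord i) _ _)

lemma coordZ_e_same (i : I) : coordZ e n hord hint i (e i) = 1 := by
  show coordFunM (e i) (n i) (proj hint i (e i)) = 1
  rw [proj_e_same]
  have hmem : (1 : ℤ) • e i ∈ AddSubgroup.zmultiples (e i) := by
    rw [one_smul]; exact AddSubgroup.mem_zmultiples _
  have key : (⟨e i, AddSubgroup.mem_zmultiples _⟩ : AddSubgroup.zmultiples (e i))
      = ⟨(1 : ℤ) • e i, hmem⟩ := Subtype.ext (one_smul ℤ (e i)).symm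
  rw [key, coordFunM_spec (e i) (n i) (hord i)]
  simp

lemma coordZ_e_ne {i j : I} (hij : j ≠ i) : coordZ e n hord hint j (e i) = 0 := by
  show coordFunM (e j) (n j) (proj hint j (e i)) = 0
  rw [proj_e_ne hint hij]
  have hmem : (0 : ℤ) • e j ∈ AddSubgroup.zmultiples (e j) := by
    rw [zero_smul]; exact zero_mem _
  have key : (0 : AddSubgroup.zmultiples (e j)) = ⟨(0 : ℤ) • e j, hmem⟩ :=
    Subtype.ext (zero_smul ℤ (e j)).symm
  rw [key, coordFunM_spec (e j) (n j) (hord j)]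
  simp

/-- Index type for triples. -/
abbrev TT (J : Type*) [LinearOrder J] := {t : J × J × J // t.1 < t.2.1 ∧ t.2.1 < t.2.2}

/-- The gcd attached to a triple. -/
abbrev gT (t : TT I) : ℕ := Nat.gcd (n t.1.1) (Nat.gcd (n t.1.2.1) (n t.1.2.2))

lemma gT_dvd1 (t : TT I) : gT n t ∣ n t.1.1 := Nat.gcd_dvd_left _ _
lemma gT_dvd2 (t : TT I) : gT n t ∣ n t.1.2.1 :=
  (Nat.gcd_dvd_right _ _).trans (Nat.gcd_dvd_left _ _)
lemma gT_dvd3 (t : TT I) : gT n t ∣ n t.1.2.2 :=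
  (Nat.gcd_dvd_right _ _).trans (Nat.gcd_dvd_right _ _)

/-- The coordinate-row map `H →ₗ[ℤ] (Fin 3 → ZMod (gT t))`. -/
noncomputable def Lmap (t : TT I) : H →ₗ[ℤ] (Fin 3 → ZMod (gT n t)) :=
  AddMonoidHom.toIntLinearMap <| AddMonoidHom.mk'
    (fun x => ![ZMod.castHom (gT_dvd1 n t) (ZMod (gT n t)) (coordZ e n hord hint t.1.1 x),
      ZMod.castHom (gT_dvd2 n t) (ZMod (gT n t)) (coordZ e n hord hint t.1.2.1 x),
      ZMod.castHom (gT_dvd3 n t) (ZMod (gT n t)) (coordZ e n hord hint t.1.2.2 x)])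
    (fun a b => by funext s; fin_cases s <;> simp [map_add] <;> rfl)

lemma Lmap_e (t : TT I) (a : I) :
    Lmap e n hord hint t (e a) =
      ![if t.1.1 = a then 1 else 0, if t.1.2.1 = a then 1 else 0,
        if t.1.2.2 = a then 1 else 0] := by
  have key : ∀ (i : I) (hdvd : gT n t ∣ n i),
      (ZMod.castHom hdvd (ZMod (gT n t))) (coordZ e n hord hint i (e a))
        = if i = a then 1 else 0 := by
    intro i hdvd
    rcases eq_or_ne i a with rfl | hia
    · rw [coordZ_e_same, map_one, if_pos rfl]
    · rw [coordZ_e_ne e n hord hint hia, map_zero, if_neg hia]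
  funext s
  fin_cases s
  · exact key _ (gT_dvd1 n t)
  · exact key _ (gT_dvd2 n t)
  · exact key _ (gT_dvd3 n t)

/-- The homomorphism `⋀³H →ₗ[ℤ] ZMod (gT t)`. -/
noncomputable def phiT (t : TT I) : (⋀[ℤ]^3 H) →ₗ[ℤ] ZMod (gT n t) :=
  Phi ((detZ (gT n t)).compLinearMap (Lmap e n hord hint t))

lemma phiT_wedge (t : TT I) (x y z : H) :
    phiT e n hord hint t (wedge3 x y z) =
      Matrix.det (Matrix.of (fun s => Lmap e n hord hint t (![x, y, z] s))) := by
  rw [phiT, Phi_wedge3]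
  rfl

/-- The wedge family. -/
noncomputable abbrev WW (t : TT I) : ⋀[ℤ]^3 H := wedge3 (e t.1.1) (e t.1.2.1) (e t.1.2.2)

lemma phiT_W_same (t : TT I) : phiT e n hord hint t (WW e t) = 1 := by
  rw [WW, phiT_wedge]
  have hm : (Matrix.of (fun s => Lmap e n hord hint t
      (![e t.1.1, e t.1.2.1, e t.1.2.2] s))) = 1 := by
    ext r c
    fin_cases r <;> fin_cases c <;>
      simp [Lmap_e, Matrix.one_apply, (ne_of_lt t.2.1), (ne_of_lt t.2.2),
        (ne_of_lt (t.2.1.trans t.2.2)), (ne_of_gt t.2.1), (ne_of_gt t.2.2),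
        (ne_of_gt (t.2.1.trans t.2.2))]
  rw [hm, Matrix.det_one]

lemma exists_out (s t : TT I) (hst : s ≠ t) :
    (s.1.1 ≠ t.1.1 ∧ s.1.1 ≠ t.1.2.1 ∧ s.1.1 ≠ t.1.2.2) ∨
    (s.1.2.1 ≠ t.1.1 ∧ s.1.2.1 ≠ t.1.2.1 ∧ s.1.2.1 ≠ t.1.2.2) ∨
    (s.1.2.2 ≠ t.1.1 ∧ s.1.2.2 ≠ t.1.2.1 ∧ s.1.2.2 ≠ t.1.2.2) := by
  by_contra hcon
  push_neg at hcon
  obtain ⟨h1, h2, h3⟩ := hcon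
  have ha : s.1.1 = t.1.1 ∨ s.1.1 = t.1.2.1 ∨ s.1.1 = t.1.2.2 := by tauto
  have hb : s.1.2.1 = t.1.1 ∨ s.1.2.1 = t.1.2.1 ∨ s.1.2.1 = t.1.2.2 := by tauto
  have hc : s.1.2.2 = t.1.1 ∨ s.1.2.2 = t.1.2.1 ∨ s.1.2.2 = t.1.2.2 := by tauto
  obtain ⟨e1, e2, e3⟩ := sorted_mem_eq s.2.1 s.2.2 t.2.1 t.2.2 ha hb hc
  exact hst (Subtype.ext (Prod.ext e1 (Prod.ext e2 e3)))

lemma phiT_W_ne (s t : TT I) (hst : s ≠ t) : phiT e n hord hint t (WW e s) = 0 := by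
  rw [WW, phiT_wedge]
  have key : ∀ (a : I), a ≠ t.1.1 → a ≠ t.1.2.1 → a ≠ t.1.2.2 →
      Lmap e n hord hint t (e a) = 0 := by
    intro a k1 k2 k3
    rw [Lmap_e, if_neg (Ne.symm k1), if_neg (Ne.symm k2), if_neg (Ne.symm k3)]
    funext c; fin_cases c <;> rfl
  rcases exists_out s t hst with ⟨k1, k2, k3⟩ | ⟨k1, k2, k3⟩ | ⟨k1, k2, k3⟩
  · apply Matrix.det_eq_zero_of_row_eq_zero 0
    intro c
    show Lmap e n hord hint t (e s.1.1) c = 0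
    rw [key _ k1 k2 k3]; rfl
  · apply Matrix.det_eq_zero_of_row_eq_zero 1
    intro c
    show Lmap e n hord hint t (e s.1.2.1) c = 0
    rw [key _ k1 k2 k3]; rfl
  · apply Matrix.det_eq_zero_of_row_eq_zero 2
    intro c
    show Lmap e n hord hint t (e s.1.2.2) c = 0
    rw [key _ k1 k2 k3]; rfl

include hord hint in
lemma addOrderOf_WW (t : TT I) : addOrderOf (WW e t) = gT n t := by
  have k1 : n t.1.1 • WW e t = 0 :=
    kill_slot0 _ _ _ _ (by rw [← hord t.1.1]; exact addOrderOf_nsmul_eq_zero _)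
  have k2 : n t.1.2.1 • WW e t = 0 :=
    kill_slot1 _ _ _ _ (by rw [← hord t.1.2.1]; exact addOrderOf_nsmul_eq_zero _)
  have k3 : n t.1.2.2 • WW e t = 0 :=
    kill_slot2 _ _ _ _ (by rw [← hord t.1.2.2]; exact addOrderOf_nsmul_eq_zero _)
  have hdvd : addOrderOf (WW e t) ∣ gT n t :=
    Nat.dvd_gcd (addOrderOf_dvd_of_nsmul_eq_zero k1)
      (Nat.dvd_gcd (addOrderOf_dvd_of_nsmul_eq_zero k2)
        (addOrderOf_dvd_of_nsmul_eq_zero k3))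
  have h0 : addOrderOf (WW e t) • WW e t = 0 := addOrderOf_nsmul_eq_zero _
  have h1 : (addOrderOf (WW e t) : ZMod (gT n t)) = 0 := by
    have := congrArg (phiT e n hord hint t) h0
    rw [map_nsmul, phiT_W_same, map_zero] at this
    rwa [nsmul_eq_mul, mul_one] at this
  have hdvd2 : gT n t ∣ addOrderOf (WW e t) :=
    (ZMod.natCast_eq_zero_iff _ _).mp h1
  exact Nat.dvd_antisymm hdvd hdvd2

lemma span_step1 (a b c : I) :
    ExteriorAlgebra.ιMulti ℤ 3 ![e a, e b, e c] ∈
      Submodule.span ℤ (Set.range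
        (fun t : TT I => ((WW e t : ⋀[ℤ]^3 H) : ExteriorAlgebra ℤ H))) := by
  set SS := Submodule.span ℤ (Set.range
    (fun t : TT I => ((WW e t : ⋀[ℤ]^3 H) : ExteriorAlgebra ℤ H))) with hSS
  have base : ∀ (i j k : I), i < j → j < k →
      ExteriorAlgebra.ιMulti ℤ 3 ![e i, e j, e k] ∈ SS := by
    intro i j k h1 h2
    exact Submodule.subset_span ⟨⟨(i, j, k), ⟨h1, h2⟩⟩, rfl⟩
  have m01 : ∀ x y z : H, ExteriorAlgebra.ιMulti ℤ 3 ![x, y, z] ∈ SS →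
      ExteriorAlgebra.ιMulti ℤ 3 ![y, x, z] ∈ SS := by
    intro x y z h; rw [swap01]; exact neg_mem h
  have m12 : ∀ x y z : H, ExteriorAlgebra.ιMulti ℤ 3 ![x, y, z] ∈ SS →
      ExteriorAlgebra.ιMulti ℤ 3 ![x, z, y] ∈ SS := by
    intro x y z h; rw [swap12]; exact neg_mem h
  rcases eq_or_ne a b with rfl | hab
  · rw [(ExteriorAlgebra.ιMulti ℤ 3 (M := H)).map_eq_zero_of_eq ![e a, e a, e c]
      (i := 0) (j := 1) rfl (by decide)]
    exact zero_mem _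
  rcases eq_or_ne a c with rfl | hac
  · rw [(ExteriorAlgebra.ιMulti ℤ 3 (M := H)).map_eq_zero_of_eq ![e a, e b, e a]
      (i := 0) (j := 2) rfl (by decide)]
    exact zero_mem _
  rcases eq_or_ne b c with rfl | hbc
  · rw [(ExteriorAlgebra.ιMulti ℤ 3 (M := H)).map_eq_zero_of_eq ![e a, e b, e b]
      (i := 1) (j := 2) rfl (by decide)]
    exact zero_mem _
  rcases lt_trichotomy a b with h1 | h1 | h1
  · rcases lt_trichotomy b c with h2 | h2 | h2
    · exact base a b c h1 h2
    · exact absurd h2 hbc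
    · rcases lt_trichotomy a c with h3 | h3 | h3
      · exact m12 (e a) (e c) (e b) (base a c b h3 h2)
      · exact absurd h3 hac
      · exact m12 (e a) (e c) (e b) (m01 (e c) (e a) (e b) (base c a b h3 h1))
  · exact absurd h1 hab
  · rcases lt_trichotomy a c with h2 | h2 | h2
    · exact m01 (e b) (e a) (e c) (base b a c h1 h2)
    · exact absurd h2 hac
    · rcases lt_trichotomy b c with h3 | h3 | h3
      · exact m01 (e b) (e a) (e c) (m12 (e b) (e c) (e a) (base b c a h3 h2))
      · exact absurd h3 hbc
      · exact m01 (e b) (e a) (e c) (m12 (e b) (e c) (e a)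
          (m01 (e c) (e b) (e a) (base c b a h3 h1)))

include hint in
lemma span_step2 (v : Fin 3 → H) :
    ExteriorAlgebra.ιMulti ℤ 3 v ∈
      Submodule.span ℤ (Set.range
        (fun t : TT I => ((WW e t : ⋀[ℤ]^3 H) : ExteriorAlgebra ℤ H))) := by
  have hex : ∃ κ : Fin 3 → I → ℤ, ∀ s, v s = ∑ i, κ s i • e i :=
    ⟨fun s => (exists_repr hint (v s)).choose, fun s => (exists_repr hint (v s)).choose_spec⟩
  obtain ⟨κ, hκ⟩ := hex
  rw [show v = fun s => ∑ i, κ s i • e i from funext hκ, expand]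
  refine Submodule.sum_mem _ (fun r _ => Submodule.smul_mem _ _ ?_)
  rw [show (fun s => e (r s)) = ![e (r 0), e (r 1), e (r 2)] from by
    funext s; fin_cases s <;> rfl]
  exact span_step1 e (r 0) (r 1) (r 2)

include hint in
lemma mem_span_WW (x : ⋀[ℤ]^3 H) : x ∈ Submodule.span ℤ (Set.range (WW e)) := by
  have h1 : Submodule.span ℤ (Set.range (ExteriorAlgebra.ιMulti ℤ 3 (M := H))) ≤
      Submodule.span ℤ (Set.range
      (fun t : TT I => ((WW e t : ⋀[ℤ]^3 H) : ExteriorAlgebra ℤ H))) := by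
    rw [Submodule.span_le]
    rintro _ ⟨v, rfl⟩
    exact span_step2 e hint v
  have hle : (⋀[ℤ]^3 H) ≤ Submodule.span ℤ (Set.range
      (fun t : TT I => ((WW e t : ⋀[ℤ]^3 H) : ExteriorAlgebra ℤ H))) :=
    le_of_eq_of_le (ExteriorAlgebra.ιMulti_span_fixedDegree ℤ 3 (M := H)).symm h1
  have hx := hle x.2
  have heq : Submodule.span ℤ (Set.range
        (fun t : TT I => ((WW e t : ⋀[ℤ]^3 H) : ExteriorAlgebra ℤ H)))
      = Submodule.map (Submodule.subtype _) (Submodule.span ℤ (Set.range (WW e))) := by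
    rw [Submodule.map_span]
    congr 1
    rw [← Set.range_comp]
    rfl
  rw [heq] at hx
  obtain ⟨y, hy, hyx⟩ := hx
  have hxy : y = x := Subtype.ext hyx
  rwa [← hxy]

end Main

end Stmt4Aux

/-- Let `H` be a finitely generated abelian group with basis `{(eᵢ, nᵢ) : i ∈ I}`,
`I` a linearly ordered finite set. Then `{(eᵢ∧eⱼ∧eₖ, gcd(nᵢ, nⱼ, nₖ)) : i < j < k}` is a basis
of `Λ³H`. -/
theorem stmt4 (H : Type*) [AddCommGroup H] (I : Type*) [Fintype I] [LinearOrder I]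
    (e : I → H) (n : I → ℕ) (hb : IsCyclicBasis e n) :
    IsCyclicBasis
      (fun t : {t : I × I × I // t.1 < t.2.1 ∧ t.2.1 < t.2.2} =>
        wedge3 (e t.1.1) (e t.1.2.1) (e t.1.2.2))
      (fun t => Nat.gcd (n t.1.1) (Nat.gcd (n t.1.2.1) (n t.1.2.2))) := by
  obtain ⟨hord, hint⟩ := hb
  constructor
  · intro t
    exact Stmt4Aux.addOrderOf_WW e n hord hint t
  constructor
  · -- injectivity
    refine (injective_iff_map_eq_zero _).mpr ?_
    intro m hm
    refine DFinsupp.ext fun t => ?_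
    have hsum : ∑ s, ((m s : ⋀[ℤ]^3 H)) = 0 := by
      rw [← hm]
      conv_rhs => rw [← DirectSum.sum_univ_of (x := m)]
      rw [map_sum]
      exact Finset.sum_congr rfl fun s _ => (DirectSum.coeAddMonoidHom_of
        (fun t : Stmt4Aux.TT I => AddSubgroup.zmultiples (Stmt4Aux.WW e t)) s (m s)).symm
    have h0 : Stmt4Aux.phiT e n hord hint t (∑ s, ((m s : ⋀[ℤ]^3 H))) = 0 := by
      rw [hsum, map_zero]
    rw [map_sum] at h0
    have hz : ∀ s ∈ Finset.univ, s ≠ t →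
        Stmt4Aux.phiT e n hord hint t ((m s : ⋀[ℤ]^3 H)) = 0 := by
      intro s _ hs
      obtain ⟨l, hl⟩ := AddSubgroup.mem_zmultiples_iff.mp (m s).2
      rw [← hl, map_zsmul, Stmt4Aux.phiT_W_ne e n hord hint s t hs, smul_zero]
    rw [Finset.sum_eq_single_of_mem t (Finset.mem_univ t) hz] at h0
    obtain ⟨k, hk⟩ := AddSubgroup.mem_zmultiples_iff.mp (m t).2
    rw [← hk, map_zsmul, Stmt4Aux.phiT_W_same e n hord hint t] at h0
    have hcast : ((k : ZMod (Stmt4Aux.gT n t))) = 0 := by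
      rwa [zsmul_eq_mul, mul_one] at h0
    have hdvd : ((Stmt4Aux.gT n t : ℤ)) ∣ k :=
      (ZMod.intCast_zmod_eq_zero_iff_dvd k (Stmt4Aux.gT n t)).mp hcast
    have hkill : k • Stmt4Aux.WW e t = 0 := by
      refine addOrderOf_dvd_iff_zsmul_eq_zero.mp ?_
      rwa [Stmt4Aux.addOrderOf_WW e n hord hint t]
    have : ((m t : ⋀[ℤ]^3 H)) = 0 := by rw [← hk]; exact hkill
    exact Subtype.ext this
  · -- surjectivity
    intro x
    have hx := Stmt4Aux.mem_span_WW e hint x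
    have hmem : x ∈ (DirectSum.coeAddMonoidHom
        (fun t : Stmt4Aux.TT I => AddSubgroup.zmultiples (Stmt4Aux.WW e t))).range := by
      refine Submodule.span_induction (p := fun y _ => y ∈ (DirectSum.coeAddMonoidHom
        (fun t : Stmt4Aux.TT I => AddSubgroup.zmultiples (Stmt4Aux.WW e t))).range)
        ?_ ?_ ?_ ?_ hx
      · rintro _ ⟨t, rfl⟩
        exact ⟨DirectSum.of _ t ⟨Stmt4Aux.WW e t, AddSubgroup.mem_zmultiples _⟩,
          DirectSum.coeAddMonoidHom_of
            (fun t : Stmt4Aux.TT I => AddSubgroup.zmultiples (Stmt4Aux.WW e t)) t _⟩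
      · exact zero_mem _
      · exact fun a b _ _ ha hb => add_mem ha hb
      · exact fun k y _ hy => AddSubgroup.zsmul_mem _ hy k
    obtain ⟨a, ha⟩ := hmem
    exact ⟨a, ha⟩
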